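/- For nonnegative integers s, t, r with s > t, the sum over all ballot paths D from (0,0) to (s+t, s-t) with at least r marked returns of q^{vmr(D)} equals q^{binomial(r+1,2)} * qbinom(s+t, s+r). -/

import Mathlib

open Finset
open scoped Classical

/-- `(q;q)_n` as a formal power series over `ℚ`. -/
noncomputable def qp (n : ℕ) : PowerSeries ℚ :=
  ∏ i ∈ Finset.range n, (1 - (PowerSeries.X : PowerSeries ℚ) ^ (i + 1))

/-- The Gaussian binomial coefficient `qbinom(n,k)`. -/
noncomputable def qbin (n k : ℕ) : PowerSeries ℚ :=
  if k ≤ n then qp n * (qp k * qp (n - k))⁻¹ else 0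

/-- Height of the lattice path (steps `true` = up `(1,1)`, `false` = down `(1,-1)`)
after the first `k` steps. -/
def ht {L : ℕ} (p : Fin L → Bool) (k : ℕ) : ℤ :=
  ∑ i ∈ Finset.univ.filter (fun i : Fin L => (i : ℕ) < k), (if p i then (1 : ℤ) else -1)

/-- `p` is a ballot path from `(0,0)` to `(s+t, s-t)`: `s` up-steps, `t` down-steps,
never passing below the `x`-axis. -/
def IsBallot {L : ℕ} (p : Fin L → Bool) (s t : ℕ) : Prop :=
  (Finset.univ.filter fun i => p i = true).card = s ∧
  (Finset.univ.filter fun i => p i = false).card = t ∧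
  ∀ k : ℕ, 0 ≤ ht p k

/-- The point with `x`-coordinate `i` is a valley: the step before it is a down-step
and the step after it is an up-step. -/
def IsValley {L : ℕ} (p : Fin L → Bool) (i : Fin L) : Prop :=
  ∃ _ : 1 ≤ (i : ℕ),
    p ⟨(i : ℕ) - 1, lt_of_le_of_lt (Nat.sub_le _ _) i.isLt⟩ = false ∧ p i = true

/-- A return is a valley on the `x`-axis. -/
def IsReturn {L : ℕ} (p : Fin L → Bool) (i : Fin L) : Prop :=
  IsValley p i ∧ ht p (i : ℕ) = 0

/-- `maj`: sum of the `x`-coordinates of the valleys. -/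
noncomputable def pmaj {L : ℕ} (p : Fin L → Bool) : ℕ :=
  ∑ i ∈ Finset.univ.filter (fun i => IsValley p i), (i : ℕ)

/-- `vmr(D) = maj(D) - (1/2) Σ (x-coordinates of marked returns)`;
the marked returns have even `x`-coordinates, so this is an integer. -/
noncomputable def vmr {L : ℕ} (p : Fin L → Bool) (M : Finset (Fin L)) : ℕ :=
  pmaj p - (∑ i ∈ M, (i : ℕ)) / 2

section paths
variable {L : ℕ}

lemma ht_succ (p : Fin L → Bool) (k : ℕ) (hk : k < L) :
    ht p (k + 1) = ht p k + (if p ⟨k, hk⟩ then 1 else -1) := by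
  unfold ht
  have hset : Finset.univ.filter (fun i : Fin L => (i : ℕ) < k + 1)
      = insert ⟨k, hk⟩ (Finset.univ.filter (fun i : Fin L => (i : ℕ) < k)) := by
    ext i
    simp only [Finset.mem_filter, Finset.mem_univ, true_and, Finset.mem_insert, Fin.ext_iff]
    omega
  rw [hset, Finset.sum_insert (by simp)]
  ring

lemma ht_of_le (p : Fin L → Bool) {k : ℕ} (hk : L ≤ k) : ht p k = ht p L := by
  unfold ht
  congr 1
  ext i
  simp only [Finset.mem_filter, Finset.mem_univ, true_and]
  exact ⟨fun _ => i.isLt, fun _ => lt_of_lt_of_le i.isLt hk⟩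

lemma ht_total (p : Fin L → Bool) {s t : ℕ}
    (h1 : (Finset.univ.filter fun i => p i = true).card = s)
    (h2 : (Finset.univ.filter fun i => p i = false).card = t) :
    ht p L = (s : ℤ) - t := by
  unfold ht
  have hu : Finset.univ.filter (fun i : Fin L => (i : ℕ) < L) = Finset.univ := by
    ext i; simp [i.isLt]
  rw [hu, ← Finset.sum_filter_add_sum_filter_not Finset.univ (fun i => p i = true)]
  have c1 : ∀ i ∈ Finset.univ.filter (fun i : Fin L => p i = true),
      (if p i then (1:ℤ) else -1) = 1 := fun i hi => by simp [(Finset.mem_filter.mp hi).2]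
  have c2 : ∀ i ∈ Finset.univ.filter (fun i : Fin L => ¬(p i = true)),
      (if p i then (1:ℤ) else -1) = -1 := fun i hi => by
    have := (Finset.mem_filter.mp hi).2
    simp only [Bool.not_eq_true] at this
    simp [this]
  rw [Finset.sum_congr rfl c1, Finset.sum_congr rfl c2, Finset.sum_const, Finset.sum_const]
  have hneg : (Finset.univ.filter fun i : Fin L => ¬(p i = true))
      = Finset.univ.filter fun i => p i = false := by
    apply Finset.filter_congr; intro i _; simp [Bool.not_eq_true]
  rw [hneg, h1, h2]
  simp
  ring

lemma ballot_length {p : Fin L → Bool} {s t : ℕ} (h : IsBallot p s t) : L = s + t := by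
  have := Finset.card_filter_add_card_filter_not (s := (Finset.univ : Finset (Fin L)))
    (p := fun i => p i = true)
  simp only [Finset.card_univ, Fintype.card_fin] at this
  have hneg : (Finset.univ.filter fun i : Fin L => ¬(p i = true))
      = Finset.univ.filter fun i => p i = false := by
    apply Finset.filter_congr; intro i _; simp [Bool.not_eq_true]
  rw [hneg, h.1, h.2.1] at this
  omega

lemma marks_card_le {p : Fin L → Bool} {s t : ℕ} (hb : IsBallot p s t) {M : Finset (Fin L)}
    (hM : ∀ i ∈ M, IsReturn p i) : M.card ≤ t := by
  rw [← hb.2.1]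
  apply Finset.card_le_card_of_injOn (fun i => ⟨(i : ℕ) - 1, lt_of_le_of_lt (Nat.sub_le _ _) i.isLt⟩)
  · intro i hi
    obtain ⟨⟨h1, h2, h3⟩, _⟩ := hM i hi
    simp only [Finset.mem_filter, Finset.mem_univ, true_and]
    simpa using h2
  · intro i hi j hj hij
    obtain ⟨⟨h1, _, _⟩, _⟩ := hM i hi
    obtain ⟨⟨h1', _, _⟩, _⟩ := hM j hj
    simp only [Fin.ext_iff] at hij ⊢
    omega

lemma marks_sum_le {p : Fin L → Bool} {M : Finset (Fin L)}
    (hM : ∀ i ∈ M, IsReturn p i) : (∑ i ∈ M, (i : ℕ)) / 2 ≤ pmaj p := by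
  have hsub : M ⊆ Finset.univ.filter (fun i => IsValley p i) := by
    intro i hi
    simp only [Finset.mem_filter, Finset.mem_univ, true_and]
    exact (hM i hi).1
  calc (∑ i ∈ M, (i : ℕ)) / 2 ≤ ∑ i ∈ M, (i : ℕ) := Nat.div_le_self _ _
    _ ≤ pmaj p := Finset.sum_le_sum_of_subset hsub

end paths

section snoc
variable {L : ℕ} (q : Fin L → Bool) (b : Bool)

lemma snoc_mk_lt {m : ℕ} (hm : m < L) (hm' : m < L + 1) :
    (Fin.snoc q b : Fin (L+1) → Bool) ⟨m, hm'⟩ = q ⟨m, hm⟩ := by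
  have h : (⟨m, hm'⟩ : Fin (L + 1)) = Fin.castSucc ⟨m, hm⟩ := by
    apply Fin.ext; rfl
  rw [h, Fin.snoc_castSucc]

lemma snoc_mk_last (hm' : L < L + 1) : (Fin.snoc q b : Fin (L+1) → Bool) ⟨L, hm'⟩ = b := by
  have h : (⟨L, hm'⟩ : Fin (L + 1)) = Fin.last L := by apply Fin.ext; rfl
  rw [h, Fin.snoc_last]

lemma ht_snoc {k : ℕ} (hk : k ≤ L) : ht (Fin.snoc q b) k = ht q k := by
  unfold ht
  rw [Finset.sum_filter, Finset.sum_filter, Fin.sum_univ_castSucc]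
  simp only [Fin.snoc_castSucc, Fin.coe_castSucc, Fin.val_last]
  rw [if_neg (by omega), add_zero]

lemma upcard_snoc : (Finset.univ.filter fun i : Fin (L+1) => (Fin.snoc q b : Fin (L+1) → Bool) i = true).card
    = (Finset.univ.filter fun j => q j = true).card + (if b = true then 1 else 0) := by
  rw [Finset.card_filter, Finset.card_filter, Fin.sum_univ_castSucc]
  simp only [Fin.snoc_castSucc, Fin.snoc_last]

lemma downcard_snoc : (Finset.univ.filter fun i : Fin (L+1) => (Fin.snoc q b : Fin (L+1) → Bool) i = false).card
    = (Finset.univ.filter fun j => q j = false).card + (if b = false then 1 else 0) := by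
  rw [Finset.card_filter, Finset.card_filter, Fin.sum_univ_castSucc]
  simp only [Fin.snoc_castSucc, Fin.snoc_last]

lemma isValley_snoc_castSucc (j : Fin L) :
    IsValley (Fin.snoc q b) (Fin.castSucc j) ↔ IsValley q j := by
  unfold IsValley
  simp only [Fin.coe_castSucc, exists_prop]
  constructor
  · rintro ⟨h1, h2, h3⟩
    refine ⟨h1, ?_, ?_⟩
    · rwa [snoc_mk_lt q b (lt_of_le_of_lt (Nat.sub_le _ _) j.isLt)] at h2
    · rwa [Fin.snoc_castSucc] at h3
  · rintro ⟨h1, h2, h3⟩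
    refine ⟨h1, ?_, ?_⟩
    · rwa [snoc_mk_lt q b (lt_of_le_of_lt (Nat.sub_le _ _) j.isLt)]
    · rwa [Fin.snoc_castSucc]

lemma isValley_snoc_last (hL : 0 < L) :
    IsValley (Fin.snoc q b) (Fin.last L) ↔
      (q ⟨L - 1, by omega⟩ = false ∧ b = true) := by
  unfold IsValley
  simp only [Fin.val_last, exists_prop]
  constructor
  · rintro ⟨h1, h2, h3⟩
    rw [snoc_mk_lt q b (by omega)] at h2
    rw [Fin.snoc_last] at h3
    exact ⟨h2, h3⟩
  · rintro ⟨h2, h3⟩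
    refine ⟨hL, ?_, ?_⟩
    · rwa [snoc_mk_lt q b (by omega)]
    · rwa [Fin.snoc_last]

lemma isReturn_snoc_castSucc (j : Fin L) :
    IsReturn (Fin.snoc q b) (Fin.castSucc j) ↔ IsReturn q j := by
  unfold IsReturn
  rw [isValley_snoc_castSucc, Fin.coe_castSucc, ht_snoc q b (le_of_lt j.isLt)]

lemma pmaj_snoc (hL : 0 < L) :
    pmaj (Fin.snoc q b) = pmaj q +
      (if q ⟨L - 1, by omega⟩ = false ∧ b = true then L else 0) := by
  unfold pmaj
  rw [Finset.sum_filter, Finset.sum_filter, Fin.sum_univ_castSucc]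
  congr 1
  · apply Finset.sum_congr rfl
    intro j _
    rw [if_congr (isValley_snoc_castSucc q b j) rfl rfl, Fin.coe_castSucc]
  · rw [if_congr (isValley_snoc_last q b hL) rfl rfl, Fin.val_last]

lemma pmaj_snoc_false : pmaj (Fin.snoc q false) = pmaj q := by
  rcases Nat.eq_zero_or_pos L with hL | hL
  · subst hL
    unfold pmaj
    rw [Finset.sum_filter, Finset.sum_filter, Fin.sum_univ_castSucc]
    rw [Finset.univ_eq_empty, Finset.sum_empty, Finset.sum_empty, zero_add]
    rw [if_neg]
    rintro ⟨h1, h2, h3⟩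
    rw [Fin.snoc_last] at h3
    exact Bool.false_ne_true h3
  · rw [pmaj_snoc q false hL, if_neg (by rintro ⟨_, h⟩; exact Bool.false_ne_true h), add_zero]

end snoc

section snoc2
variable {L : ℕ}

lemma ht_nonneg_of_snoc {q : Fin L → Bool} {b : Bool}
    (h : ∀ k, 0 ≤ ht (Fin.snoc q b : Fin (L+1) → Bool) k) : ∀ k, 0 ≤ ht q k := by
  intro k
  rcases le_or_gt k L with hk | hk
  · rw [← ht_snoc q b hk]; exact h k
  · rw [ht_of_le q (le_of_lt hk), ← ht_snoc q b (le_refl L)]; exact h L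

lemma ht_nonneg_snoc {q : Fin L → Bool} {b : Bool}
    (h : ∀ k, 0 ≤ ht q k) (hlast : 0 ≤ ht (Fin.snoc q b : Fin (L+1) → Bool) (L + 1)) :
    ∀ k, 0 ≤ ht (Fin.snoc q b : Fin (L+1) → Bool) k := by
  intro k
  rcases le_or_gt k L with hk | hk
  · rw [ht_snoc q b hk]; exact h k
  · rw [ht_of_le _ (by omega : L + 1 ≤ k)]; exact hlast

lemma isBallot_snoc_false {q : Fin L → Bool} {s t : ℕ} :
    IsBallot (Fin.snoc q false) s (t + 1) ↔ (IsBallot q s t ∧ t + 1 ≤ s) := by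
  constructor
  · rintro ⟨h1, h2, h3⟩
    rw [upcard_snoc] at h1
    rw [downcard_snoc] at h2
    simp at h1 h2
    have h2' : (Finset.univ.filter fun j => q j = false).card = t := by omega
    have hb : IsBallot q s t := ⟨h1, h2', ht_nonneg_of_snoc h3⟩
    refine ⟨hb, ?_⟩
    have htot : ht (Fin.snoc q false : Fin (L+1) → Bool) (L + 1) = (s : ℤ) - (t + 1) := by
      apply ht_total
      · rw [upcard_snoc, h1]; simp
      · rw [downcard_snoc]; rw [h2']; simp
    have := h3 (L + 1)
    rw [htot] at this
    have : (t : ℤ) + 1 ≤ s := by omega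
    exact_mod_cast this
  · rintro ⟨⟨h1, h2, h3⟩, hts⟩
    have c1 : (Finset.univ.filter fun i : Fin (L+1) => (Fin.snoc q false : Fin (L+1) → Bool) i = true).card = s := by
      rw [upcard_snoc, h1]; simp
    have c2 : (Finset.univ.filter fun i : Fin (L+1) => (Fin.snoc q false : Fin (L+1) → Bool) i = false).card = t + 1 := by
      rw [downcard_snoc, h2]; simp
    refine ⟨c1, c2, ht_nonneg_snoc h3 ?_⟩
    rw [ht_total _ c1 c2]
    have : (t : ℤ) + 1 ≤ s := by exact_mod_cast hts
    omega

lemma isBallot_snoc_true {q : Fin L → Bool} {s t : ℕ} :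
    IsBallot (Fin.snoc q true) (s + 1) t ↔ IsBallot q s t := by
  constructor
  · rintro ⟨h1, h2, h3⟩
    rw [upcard_snoc] at h1
    rw [downcard_snoc] at h2
    simp at h1 h2
    have h1' : (Finset.univ.filter fun j => q j = true).card = s := by omega
    exact ⟨h1', h2, ht_nonneg_of_snoc h3⟩
  · rintro ⟨h1, h2, h3⟩
    have c1 : (Finset.univ.filter fun i : Fin (L+1) => (Fin.snoc q true : Fin (L+1) → Bool) i = true).card = s + 1 := by
      rw [upcard_snoc, h1]; simp
    have c2 : (Finset.univ.filter fun i : Fin (L+1) => (Fin.snoc q true : Fin (L+1) → Bool) i = false).card = t := by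
      rw [downcard_snoc, h2]; simp
    refine ⟨c1, c2, ht_nonneg_snoc h3 ?_⟩
    rw [ht_total _ c1 c2]
    have hqt : ht q L = (s : ℤ) - t := ht_total q h1 h2
    have := h3 L
    rw [hqt] at this
    omega

/-- map a mark set up along `castSucc`. -/
def emb (N : Finset (Fin L)) : Finset (Fin (L + 1)) :=
  N.map ⟨Fin.castSucc, Fin.castSucc_injective L⟩

/-- restrict a mark set in `Fin (L+1)` to `Fin L`. -/
noncomputable def res (M : Finset (Fin (L + 1))) : Finset (Fin L) :=
  Finset.univ.filter (fun j => Fin.castSucc j ∈ M)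

lemma mem_emb {N : Finset (Fin L)} {j : Fin L} : Fin.castSucc j ∈ emb N ↔ j ∈ N := by
  unfold emb
  constructor
  · intro h
    obtain ⟨a, ha, hae⟩ := Finset.mem_map.mp h
    have : a = j := Fin.castSucc_injective L hae
    rwa [← this]
  · intro h
    exact Finset.mem_map_of_mem _ h

lemma res_emb (N : Finset (Fin L)) : res (emb N) = N := by
  ext j
  simp only [res, Finset.mem_filter, Finset.mem_univ, true_and, mem_emb]

lemma mem_emb_res {M : Finset (Fin (L + 1))} {i : Fin (L + 1)} (hi : i ≠ Fin.last L) :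
    i ∈ emb (res M) ↔ i ∈ M := by
  have hlt : (i : ℕ) < L := by
    have := i.isLt
    rcases Nat.lt_or_ge (i : ℕ) L with h | h
    · exact h
    · exfalso; apply hi; apply Fin.ext; simp only [Fin.val_last]; omega
  have : i = Fin.castSucc ⟨(i : ℕ), hlt⟩ := by apply Fin.ext; rfl
  rw [this, mem_emb]
  simp only [res, Finset.mem_filter, Finset.mem_univ, true_and]

lemma emb_res {M : Finset (Fin (L + 1))} (h : Fin.last L ∉ M) : emb (res M) = M := by
  ext i
  by_cases hi : i = Fin.last L
  · subst hi
    constructor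
    · intro hmem
      exfalso
      obtain ⟨a, _, hae⟩ := Finset.mem_map.mp hmem
      have : (Fin.last L : ℕ) < L := by
        rw [← hae]; exact a.isLt
      simp [Fin.val_last] at this
    · intro hmem; exact absurd hmem h
  · exact mem_emb_res hi

lemma emb_res_insert {M : Finset (Fin (L + 1))} (h : Fin.last L ∈ M) :
    insert (Fin.last L) (emb (res M)) = M := by
  ext i
  by_cases hi : i = Fin.last L
  · subst hi; simp [h]
  · simp only [Finset.mem_insert]
    rw [mem_emb_res hi]
    simp [hi]

lemma last_not_mem_emb (N : Finset (Fin L)) : Fin.last L ∉ emb N := by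
  intro hmem
  obtain ⟨a, _, hae⟩ := Finset.mem_map.mp hmem
  have : (Fin.last L : ℕ) < L := by rw [← hae]; exact a.isLt
  simp [Fin.val_last] at this

lemma sum_emb (N : Finset (Fin L)) : ∑ i ∈ emb N, (i : ℕ) = ∑ j ∈ N, (j : ℕ) := by
  unfold emb
  rw [Finset.sum_map]
  rfl

lemma card_emb (N : Finset (Fin L)) : (emb N).card = N.card := Finset.card_map _

lemma card_res_of_not_last {M : Finset (Fin (L+1))} (h : Fin.last L ∉ M) :
    (res M).card = M.card := by
  conv_rhs => rw [← emb_res h]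
  rw [card_emb]

lemma card_res_of_last {M : Finset (Fin (L+1))} (h : Fin.last L ∈ M) :
    (res M).card + 1 = M.card := by
  conv_rhs => rw [← emb_res_insert h]
  rw [Finset.card_insert_of_notMem (last_not_mem_emb _), card_emb]

lemma sum_res_of_not_last {M : Finset (Fin (L+1))} (h : Fin.last L ∉ M) :
    ∑ j ∈ res M, (j : ℕ) = ∑ i ∈ M, (i : ℕ) := by
  conv_rhs => rw [← emb_res h]
  rw [sum_emb]

lemma sum_res_of_last {M : Finset (Fin (L+1))} (h : Fin.last L ∈ M) :
    (∑ j ∈ res M, (j : ℕ)) + L = ∑ i ∈ M, (i : ℕ) := by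
  conv_rhs => rw [← emb_res_insert h]
  rw [Finset.sum_insert (last_not_mem_emb _), sum_emb, Fin.val_last]
  ring

lemma returns_emb {q : Fin L → Bool} {b : Bool} {N : Finset (Fin L)} :
    (∀ i ∈ emb N, IsReturn (Fin.snoc q b : Fin (L+1) → Bool) i) ↔ (∀ j ∈ N, IsReturn q j) := by
  constructor
  · intro h j hj
    rw [← isReturn_snoc_castSucc q b j]
    exact h _ (mem_emb.mpr hj)
  · intro h i hi
    obtain ⟨a, ha, hae⟩ := Finset.mem_map.mp hi
    subst hae
    exact (isReturn_snoc_castSucc q b a).mpr (h a ha)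

lemma snoc_comp_castSucc {p : Fin (L+1) → Bool} {b : Bool} (h : p (Fin.last L) = b) :
    (Fin.snoc (fun j => p (Fin.castSucc j)) b : Fin (L+1) → Bool) = p := by
  funext i
  induction i using Fin.lastCases with
  | last => rw [Fin.snoc_last, h]
  | cast j => rw [Fin.snoc_castSucc]

end snoc2

section vmrlem
variable {L : ℕ}

lemma vmr_snoc_false (q : Fin L → Bool) (N : Finset (Fin L)) :
    vmr (Fin.snoc q false) (emb N) = vmr q N := by
  unfold vmr
  rw [pmaj_snoc_false, sum_emb]

lemma vmr_snoc_true_novalley (q : Fin L → Bool) (hL : 0 < L)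
    (hq : q ⟨L - 1, by omega⟩ = true) (N : Finset (Fin L)) :
    vmr (Fin.snoc q true) (emb N) = vmr q N := by
  unfold vmr
  rw [pmaj_snoc q true hL, sum_emb, if_neg (by rintro ⟨h, _⟩; rw [hq] at h; simp at h)]
  omega

lemma vmr_snoc_true_unmarked (q : Fin L → Bool) (hL : 0 < L)
    (hq : q ⟨L - 1, by omega⟩ = false) (N : Finset (Fin L))
    (hret : ∀ j ∈ N, IsReturn q j) :
    vmr (Fin.snoc q true) (emb N) = L + vmr q N := by
  unfold vmr
  rw [pmaj_snoc q true hL, sum_emb, if_pos ⟨hq, rfl⟩]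
  have h1 : (∑ j ∈ N, (j : ℕ)) / 2 ≤ pmaj q := marks_sum_le hret
  omega

lemma vmr_snoc_true_marked (q : Fin L → Bool) {u : ℕ} (hL : L = 2 * u) (hL0 : 0 < L)
    (hq : q ⟨L - 1, by omega⟩ = false) (N : Finset (Fin L))
    (hret : ∀ j ∈ N, IsReturn q j) :
    vmr (Fin.snoc q true) (insert (Fin.last L) (emb N)) = u + vmr q N := by
  unfold vmr
  rw [pmaj_snoc q true hL0, if_pos ⟨hq, rfl⟩]
  rw [Finset.sum_insert (last_not_mem_emb N), sum_emb, Fin.val_last]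
  have h1 : (∑ j ∈ N, (j : ℕ)) / 2 ≤ pmaj q := marks_sum_le hret
  omega

end vmrlem

section sums
open PowerSeries

def PP (L s t r : ℕ) (x : (Fin L → Bool) × Finset (Fin L)) : Prop :=
  IsBallot x.1 s t ∧ (∀ i ∈ x.2, IsReturn x.1 i) ∧ r ≤ x.2.card

def Ends (L : ℕ) (p : Fin L → Bool) (b : Bool) : Prop :=
  ∃ h : 0 < L, p ⟨L - 1, Nat.sub_lt h Nat.one_pos⟩ = b

noncomputable def gsum (L s t r : ℕ) : PowerSeries ℚ :=
  ∑ x ∈ (Finset.univ : Finset ((Fin L → Bool) × Finset (Fin L))).filter (PP L s t r),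
    (PowerSeries.X : PowerSeries ℚ) ^ vmr x.1 x.2

noncomputable def absum (L s t r : ℕ) (b : Bool) : PowerSeries ℚ :=
  ∑ x ∈ (Finset.univ : Finset ((Fin L → Bool) × Finset (Fin L))).filter
      (fun x => PP L s t r x ∧ Ends L x.1 b),
    (PowerSeries.X : PowerSeries ℚ) ^ vmr x.1 x.2

variable {L s t r : ℕ}

lemma gsum_split (hL : 0 < L) : gsum L s t r = absum L s t r true + absum L s t r false := by
  unfold gsum absum
  rw [← Finset.sum_filter_add_sum_filter_not
    (Finset.univ.filter (PP L s t r)) (fun x => Ends L x.1 true)]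
  congr 1
  · rw [Finset.filter_filter]
  · rw [Finset.filter_filter]
    apply Finset.sum_congr _ (fun _ _ => rfl)
    apply Finset.filter_congr
    intro x _
    constructor
    · rintro ⟨hP, hnE⟩
      refine ⟨hP, hL, ?_⟩
      have : ¬ (x.1 ⟨L - 1, Nat.sub_lt hL Nat.one_pos⟩ = true) := fun hc => hnE ⟨hL, hc⟩
      simpa using this
    · rintro ⟨hP, hE⟩
      obtain ⟨h0, hE⟩ := hE
      refine ⟨hP, fun hc => ?_⟩
      obtain ⟨_, hc⟩ := hc
      rw [hc] at hE
      simp at hE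

lemma gsum_zero_of_lt (h : t < r) : gsum L s t r = 0 := by
  unfold gsum
  rw [Finset.filter_eq_empty_iff.mpr, Finset.sum_empty]
  rintro x - ⟨hb, hret, hcard⟩
  have := marks_card_le hb hret
  omega

lemma absum_zero_of_lt (h : t < r) {b : Bool} : absum L s t r b = 0 := by
  unfold absum
  rw [Finset.filter_eq_empty_iff.mpr, Finset.sum_empty]
  rintro x - ⟨⟨hb, hret, hcard⟩, -⟩
  have := marks_card_le hb hret
  omega

lemma absum_true_self : absum L s s r true = 0 := by
  unfold absum
  rw [Finset.filter_eq_empty_iff.mpr, Finset.sum_empty]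
  rintro x - ⟨⟨hb, -, -⟩, hL, hlast⟩
  have htL : ht x.1 L = 0 := by
    rw [ht_total x.1 hb.1 hb.2.1]; ring
  have hstep : ht x.1 ((L - 1) + 1) = ht x.1 (L - 1) + 1 := by
    rw [ht_succ x.1 (L - 1) (Nat.sub_lt hL Nat.one_pos), hlast]
    simp
  rw [show (L - 1) + 1 = L by omega, htL] at hstep
  have := hb.2.2 (L - 1)
  omega

lemma ballot_all_true {p : Fin L → Bool} {u : ℕ} (hb : IsBallot p u 0) (i : Fin L) :
    p i = true := by
  by_contra hc
  have : i ∈ Finset.univ.filter (fun i => p i = false) := by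
    simp only [Finset.mem_filter, Finset.mem_univ, true_and, Bool.not_eq_true] at hc ⊢
    exact hc
  rw [Finset.card_eq_zero.mp hb.2.1] at this
  exact absurd this (Finset.notMem_empty i)

lemma gsum_base : gsum s s 0 r = if r = 0 then 1 else 0 := by
  rcases Nat.eq_zero_or_pos r with hr | hr
  · subst hr
    rw [if_pos rfl]
    unfold gsum
    have hfilter : (Finset.univ : Finset ((Fin s → Bool) × Finset (Fin s))).filter (PP s s 0 0)
        = {((fun _ => true), (∅ : Finset (Fin s)))} := by
      ext x
      simp only [Finset.mem_filter, Finset.mem_univ, true_and, Finset.mem_singleton]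
      constructor
      · rintro ⟨hb, hret, -⟩
        have h1 : x.1 = fun _ => true := funext (fun i => ballot_all_true hb i)
        have h2 : x.2 = ∅ := Finset.card_eq_zero.mp (Nat.le_zero.mp (marks_card_le hb hret))
        rw [Prod.ext_iff]
        exact ⟨h1, h2⟩
      · intro hx
        rw [hx]
        refine ⟨⟨?_, ?_, ?_⟩, by simp, by simp⟩
        · simp
        · simp
        · intro k
          unfold ht
          apply Finset.sum_nonneg
          intro i _
          simp
    rw [hfilter, Finset.sum_singleton]
    have hv : vmr (fun _ => true : Fin s → Bool) (∅ : Finset (Fin s)) = 0 := by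
      unfold vmr pmaj
      have : (Finset.univ : Finset (Fin s)).filter (fun i => IsValley (fun _ => true) i) = ∅ := by
        rw [Finset.filter_eq_empty_iff]
        rintro i - ⟨-, h2, -⟩
        simp at h2
      rw [this]
      simp
    rw [hv, pow_zero]
  · rw [if_neg (by omega)]
    exact gsum_zero_of_lt hr

lemma absum_base (hs : 0 < s) : absum s s 0 r true = gsum s s 0 r := by
  unfold absum gsum
  apply Finset.sum_congr _ (fun _ _ => rfl)
  apply Finset.filter_congr
  intro x _
  constructor
  · rintro ⟨hP, -⟩; exact hP
  · intro hP
    exact ⟨hP, hs, ballot_all_true hP.1 _⟩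

end sums

section bij
open PowerSeries
variable {L s t r : ℕ}

lemma lemma_B (hst : t + 1 ≤ s) : absum (L + 1) s (t + 1) r false = gsum L s t r := by
  unfold absum gsum
  refine Finset.sum_nbij' (i := fun x => ((fun j => x.1 (Fin.castSucc j)), res x.2))
    (j := fun y => ((Fin.snoc y.1 false : Fin (L+1) → Bool), emb y.2)) ?_ ?_ ?_ ?_ ?_
  · -- forward membership
    intro x hx
    simp only [Finset.mem_filter, Finset.mem_univ, true_and] at hx ⊢
    obtain ⟨⟨hb, hret, hcard⟩, hE⟩ := hx
    obtain ⟨hh, hlast⟩ := hE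
    have hlast' : x.1 (Fin.last L) = false := hlast
    have hsnoc : (Fin.snoc (fun j => x.1 (Fin.castSucc j)) false : Fin (L+1) → Bool) = x.1 :=
      snoc_comp_castSucc hlast'
    have hlnm : Fin.last L ∉ x.2 := by
      intro hmem
      obtain ⟨⟨-, -, h3⟩, -⟩ := hret _ hmem
      rw [hlast'] at h3
      simp at h3
    have hM : emb (res x.2) = x.2 := emb_res hlnm
    rw [← hsnoc] at hb
    refine ⟨(isBallot_snoc_false.mp hb).1, ?_, ?_⟩
    · rw [← returns_emb (b := false)]
      rw [hM, hsnoc]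
      exact hret
    · rw [card_res_of_not_last hlnm]
      exact hcard
  · -- backward membership
    intro y hy
    simp only [Finset.mem_filter, Finset.mem_univ, true_and] at hy ⊢
    obtain ⟨hb, hret, hcard⟩ := hy
    refine ⟨⟨isBallot_snoc_false.mpr ⟨hb, hst⟩, returns_emb.mpr hret, ?_⟩, ?_⟩
    · rw [card_emb]; exact hcard
    · exact ⟨Nat.succ_pos L, snoc_mk_last y.1 false _⟩
  · -- left inverse
    intro x hx
    simp only [Finset.mem_filter, Finset.mem_univ, true_and] at hx
    obtain ⟨⟨-, hret, -⟩, hE⟩ := hx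
    obtain ⟨hh, hlast⟩ := hE
    have hlast' : x.1 (Fin.last L) = false := hlast
    have hlnm : Fin.last L ∉ x.2 := by
      intro hmem
      obtain ⟨⟨-, -, h3⟩, -⟩ := hret _ hmem
      rw [hlast'] at h3
      simp at h3
    exact Prod.ext (snoc_comp_castSucc hlast') (emb_res hlnm)
  · -- right inverse
    intro y hy
    refine Prod.ext ?_ (res_emb y.2)
    funext j
    show (Fin.snoc y.1 false : Fin (L+1) → Bool) (Fin.castSucc j) = y.1 j
    exact Fin.snoc_castSucc _ _ j
  · -- values
    intro x hx
    simp only [Finset.mem_filter, Finset.mem_univ, true_and] at hx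
    obtain ⟨⟨-, hret, -⟩, hE⟩ := hx
    obtain ⟨hh, hlast⟩ := hE
    have hlast' : x.1 (Fin.last L) = false := hlast
    have hlnm : Fin.last L ∉ x.2 := by
      intro hmem
      obtain ⟨⟨-, -, h3⟩, -⟩ := hret _ hmem
      rw [hlast'] at h3
      simp at h3
    have hsnoc : (Fin.snoc (fun j => x.1 (Fin.castSucc j)) false : Fin (L+1) → Bool) = x.1 :=
      snoc_comp_castSucc hlast'
    have hM : emb (res x.2) = x.2 := emb_res hlnm
    congr 1
    conv_lhs => rw [← hsnoc, ← hM]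
    exact vmr_snoc_false _ _

end bij

section bij2
open PowerSeries
variable {L s t r : ℕ}

lemma lemma_Aa (hL : 0 < L) :
    ∑ x ∈ ((Finset.univ : Finset ((Fin (L+1) → Bool) × Finset (Fin (L+1)))).filter
        (fun x => PP (L+1) (s+1) t r x ∧ Ends (L+1) x.1 true)).filter
        (fun x => x.1 (Fin.castSucc ⟨L - 1, Nat.sub_lt hL Nat.one_pos⟩) = true),
      (PowerSeries.X : PowerSeries ℚ) ^ vmr x.1 x.2
    = absum L s t r true := by
  unfold absum
  refine Finset.sum_nbij' (i := fun x => ((fun j => x.1 (Fin.castSucc j)), res x.2))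
    (j := fun y => ((Fin.snoc y.1 true : Fin (L+1) → Bool), emb y.2)) ?_ ?_ ?_ ?_ ?_
  · intro x hx
    simp only [Finset.mem_filter, Finset.mem_univ, true_and] at hx ⊢
    obtain ⟨⟨⟨hb, hret, hcard⟩, hh, hlast⟩, hc⟩ := hx
    have hlast' : x.1 (Fin.last L) = true := hlast
    have hsnoc : (Fin.snoc (fun j => x.1 (Fin.castSucc j)) true : Fin (L+1) → Bool) = x.1 :=
      snoc_comp_castSucc hlast'
    have hlnm : Fin.last L ∉ x.2 := by
      intro hmem
      obtain ⟨⟨h1, h2, h3⟩, -⟩ := hret _ hmem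
      have h2' : x.1 (Fin.castSucc ⟨L - 1, Nat.sub_lt hL Nat.one_pos⟩) = false := h2
      rw [hc] at h2'
      simp at h2'
    have hM : emb (res x.2) = x.2 := emb_res hlnm
    rw [← hsnoc] at hb
    refine ⟨⟨isBallot_snoc_true.mp hb, ?_, ?_⟩, hL, hc⟩
    · rw [← returns_emb (b := true), hM, hsnoc]
      exact hret
    · rw [card_res_of_not_last hlnm]
      exact hcard
  · intro y hy
    simp only [Finset.mem_filter, Finset.mem_univ, true_and] at hy ⊢
    obtain ⟨⟨hb, hret, hcard⟩, hh, hlast⟩ := hy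
    refine ⟨⟨⟨isBallot_snoc_true.mpr hb, returns_emb.mpr hret, ?_⟩,
      Nat.succ_pos L, snoc_mk_last y.1 true _⟩, ?_⟩
    · rw [card_emb]; exact hcard
    · show (Fin.snoc y.1 true : Fin (L+1) → Bool) (Fin.castSucc ⟨L - 1, Nat.sub_lt hL Nat.one_pos⟩) = true
      rw [Fin.snoc_castSucc]
      exact hlast
  · intro x hx
    simp only [Finset.mem_filter, Finset.mem_univ, true_and] at hx
    obtain ⟨⟨⟨hb, hret, hcard⟩, hh, hlast⟩, hc⟩ := hx
    have hlast' : x.1 (Fin.last L) = true := hlast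
    have hlnm : Fin.last L ∉ x.2 := by
      intro hmem
      obtain ⟨⟨h1, h2, h3⟩, -⟩ := hret _ hmem
      have h2' : x.1 (Fin.castSucc ⟨L - 1, Nat.sub_lt hL Nat.one_pos⟩) = false := h2
      rw [hc] at h2'
      simp at h2'
    exact Prod.ext (snoc_comp_castSucc hlast') (emb_res hlnm)
  · intro y hy
    refine Prod.ext ?_ (res_emb y.2)
    funext j
    show (Fin.snoc y.1 true : Fin (L+1) → Bool) (Fin.castSucc j) = y.1 j
    exact Fin.snoc_castSucc _ _ j
  · intro x hx
    simp only [Finset.mem_filter, Finset.mem_univ, true_and] at hx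
    obtain ⟨⟨⟨hb, hret, hcard⟩, hh, hlast⟩, hc⟩ := hx
    have hlast' : x.1 (Fin.last L) = true := hlast
    have hsnoc : (Fin.snoc (fun j => x.1 (Fin.castSucc j)) true : Fin (L+1) → Bool) = x.1 :=
      snoc_comp_castSucc hlast'
    have hlnm : Fin.last L ∉ x.2 := by
      intro hmem
      obtain ⟨⟨h1, h2, h3⟩, -⟩ := hret _ hmem
      have h2' : x.1 (Fin.castSucc ⟨L - 1, Nat.sub_lt hL Nat.one_pos⟩) = false := h2
      rw [hc] at h2'
      simp at h2'
    have hM : emb (res x.2) = x.2 := emb_res hlnm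
    congr 1
    conv_lhs => rw [← hsnoc, ← hM]
    exact vmr_snoc_true_novalley _ hL hc _

lemma lemma_Ab (hL : 0 < L) (hne : s ≠ t) :
    ∑ x ∈ ((Finset.univ : Finset ((Fin (L+1) → Bool) × Finset (Fin (L+1)))).filter
        (fun x => PP (L+1) (s+1) t r x ∧ Ends (L+1) x.1 true)).filter
        (fun x => ¬(x.1 (Fin.castSucc ⟨L - 1, Nat.sub_lt hL Nat.one_pos⟩) = true)),
      (PowerSeries.X : PowerSeries ℚ) ^ vmr x.1 x.2
    = (PowerSeries.X : PowerSeries ℚ) ^ L * absum L s t r false := by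
  unfold absum
  rw [Finset.mul_sum]
  refine Finset.sum_nbij' (i := fun x => ((fun j => x.1 (Fin.castSucc j)), res x.2))
    (j := fun y => ((Fin.snoc y.1 true : Fin (L+1) → Bool), emb y.2)) ?_ ?_ ?_ ?_ ?_
  · intro x hx
    simp only [Finset.mem_filter, Finset.mem_univ, true_and, Bool.not_eq_true] at hx ⊢
    obtain ⟨⟨⟨hb, hret, hcard⟩, hh, hlast⟩, hc⟩ := hx
    have hlast' : x.1 (Fin.last L) = true := hlast
    have hsnoc : (Fin.snoc (fun j => x.1 (Fin.castSucc j)) true : Fin (L+1) → Bool) = x.1 :=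
      snoc_comp_castSucc hlast'
    rw [← hsnoc] at hb
    have hbq : IsBallot (fun j => x.1 (Fin.castSucc j)) s t := isBallot_snoc_true.mp hb
    have hlnm : Fin.last L ∉ x.2 := by
      intro hmem
      have hret0 := (hret _ hmem).2
      have hret1 : ht x.1 L = 0 := hret0
      rw [← hsnoc, ht_snoc _ true (le_refl L), ht_total _ hbq.1 hbq.2.1] at hret1
      apply hne
      omega
    have hM : emb (res x.2) = x.2 := emb_res hlnm
    refine ⟨⟨hbq, ?_, ?_⟩, hL, hc⟩
    · rw [← returns_emb (b := true), hM, hsnoc]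
      exact hret
    · rw [card_res_of_not_last hlnm]
      exact hcard
  · intro y hy
    simp only [Finset.mem_filter, Finset.mem_univ, true_and, Bool.not_eq_true] at hy ⊢
    obtain ⟨⟨hb, hret, hcard⟩, hh, hlast⟩ := hy
    refine ⟨⟨⟨isBallot_snoc_true.mpr hb, returns_emb.mpr hret, ?_⟩,
      Nat.succ_pos L, snoc_mk_last y.1 true _⟩, ?_⟩
    · rw [card_emb]; exact hcard
    · show (Fin.snoc y.1 true : Fin (L+1) → Bool) (Fin.castSucc ⟨L - 1, Nat.sub_lt hL Nat.one_pos⟩) = false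
      rw [Fin.snoc_castSucc]
      exact hlast
  · intro x hx
    simp only [Finset.mem_filter, Finset.mem_univ, true_and, Bool.not_eq_true] at hx
    obtain ⟨⟨⟨hb, hret, hcard⟩, hh, hlast⟩, hc⟩ := hx
    have hlast' : x.1 (Fin.last L) = true := hlast
    have hsnoc : (Fin.snoc (fun j => x.1 (Fin.castSucc j)) true : Fin (L+1) → Bool) = x.1 :=
      snoc_comp_castSucc hlast'
    have hbq : IsBallot (fun j => x.1 (Fin.castSucc j)) s t := by
      rw [← hsnoc] at hb
      exact isBallot_snoc_true.mp hb
    have hlnm : Fin.last L ∉ x.2 := by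
      intro hmem
      have hret1 : ht x.1 L = 0 := (hret _ hmem).2
      rw [← hsnoc, ht_snoc _ true (le_refl L), ht_total _ hbq.1 hbq.2.1] at hret1
      apply hne
      omega
    exact Prod.ext hsnoc (emb_res hlnm)
  · intro y hy
    refine Prod.ext ?_ (res_emb y.2)
    funext j
    show (Fin.snoc y.1 true : Fin (L+1) → Bool) (Fin.castSucc j) = y.1 j
    exact Fin.snoc_castSucc _ _ j
  · intro x hx
    simp only [Finset.mem_filter, Finset.mem_univ, true_and, Bool.not_eq_true] at hx
    obtain ⟨⟨⟨hb, hret, hcard⟩, hh, hlast⟩, hc⟩ := hx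
    have hlast' : x.1 (Fin.last L) = true := hlast
    have hsnoc : (Fin.snoc (fun j => x.1 (Fin.castSucc j)) true : Fin (L+1) → Bool) = x.1 :=
      snoc_comp_castSucc hlast'
    have hbq : IsBallot (fun j => x.1 (Fin.castSucc j)) s t := by
      rw [← hsnoc] at hb
      exact isBallot_snoc_true.mp hb
    have hlnm : Fin.last L ∉ x.2 := by
      intro hmem
      have hret1 : ht x.1 L = 0 := (hret _ hmem).2
      rw [← hsnoc, ht_snoc _ true (le_refl L), ht_total _ hbq.1 hbq.2.1] at hret1
      apply hne
      omega
    have hM : emb (res x.2) = x.2 := emb_res hlnm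
    have hretq : ∀ j ∈ res x.2, IsReturn (fun j => x.1 (Fin.castSucc j)) j := by
      rw [← returns_emb (b := true), hM, hsnoc]
      exact hret
    have hv : vmr x.1 x.2 = L + vmr (fun j => x.1 (Fin.castSucc j)) (res x.2) := by
      conv_lhs => rw [← hsnoc, ← hM]
      exact vmr_snoc_true_unmarked _ hL hc _ hretq
    rw [hv, pow_add]

end bij2

section bij3
open PowerSeries
variable {L t r : ℕ}

lemma res_insert_emb (N : Finset (Fin L)) : res (insert (Fin.last L) (emb N)) = N := by
  ext j
  simp only [res, Finset.mem_filter, Finset.mem_univ, true_and, Finset.mem_insert]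
  constructor
  · rintro (h | h)
    · exfalso
      have := Fin.castSucc_lt_last j
      rw [h] at this
      exact lt_irrefl _ this
    · exact mem_emb.mp h
  · intro h
    exact Or.inr (mem_emb.mpr h)

lemma lemma_Cb (hL : 0 < L) :
    ∑ x ∈ ((Finset.univ : Finset ((Fin (L+1) → Bool) × Finset (Fin (L+1)))).filter
        (fun x => PP (L+1) (t+1) t r x ∧ Ends (L+1) x.1 true)).filter
        (fun x => ¬(x.1 (Fin.castSucc ⟨L - 1, Nat.sub_lt hL Nat.one_pos⟩) = true)),
      (PowerSeries.X : PowerSeries ℚ) ^ vmr x.1 x.2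
    = (PowerSeries.X : PowerSeries ℚ) ^ L * absum L t t r false
      + (PowerSeries.X : PowerSeries ℚ) ^ t * absum L t t (r - 1) false := by
  rw [← Finset.sum_filter_add_sum_filter_not
    (((Finset.univ : Finset ((Fin (L+1) → Bool) × Finset (Fin (L+1)))).filter
        (fun x => PP (L+1) (t+1) t r x ∧ Ends (L+1) x.1 true)).filter
        (fun x => ¬(x.1 (Fin.castSucc ⟨L - 1, Nat.sub_lt hL Nat.one_pos⟩) = true)))
    (fun x => Fin.last L ∈ x.2)]
  rw [add_comm]
  congr 1
  · -- unmarked part: last ∉ x.2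
    unfold absum
    rw [Finset.mul_sum]
    refine Finset.sum_nbij' (i := fun x => ((fun j => x.1 (Fin.castSucc j)), res x.2))
      (j := fun y => ((Fin.snoc y.1 true : Fin (L+1) → Bool), emb y.2)) ?_ ?_ ?_ ?_ ?_
    · intro x hx
      simp only [Finset.mem_filter, Finset.mem_univ, true_and, Bool.not_eq_true] at hx ⊢
      obtain ⟨⟨⟨⟨hb, hret, hcard⟩, hh, hlast⟩, hc⟩, hlnm⟩ := hx
      have hlast' : x.1 (Fin.last L) = true := hlast
      have hsnoc : (Fin.snoc (fun j => x.1 (Fin.castSucc j)) true : Fin (L+1) → Bool) = x.1 :=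
        snoc_comp_castSucc hlast'
      rw [← hsnoc] at hb
      have hbq : IsBallot (fun j => x.1 (Fin.castSucc j)) t t := isBallot_snoc_true.mp hb
      have hM : emb (res x.2) = x.2 := emb_res hlnm
      refine ⟨⟨hbq, ?_, ?_⟩, hL, hc⟩
      · rw [← returns_emb (b := true), hM, hsnoc]
        exact hret
      · rw [card_res_of_not_last hlnm]
        exact hcard
    · intro y hy
      simp only [Finset.mem_filter, Finset.mem_univ, true_and, Bool.not_eq_true] at hy ⊢
      obtain ⟨⟨hb, hret, hcard⟩, hh, hlast⟩ := hy
      refine ⟨⟨⟨⟨isBallot_snoc_true.mpr hb, returns_emb.mpr hret, ?_⟩,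
        Nat.succ_pos L, snoc_mk_last y.1 true _⟩, ?_⟩, last_not_mem_emb _⟩
      · rw [card_emb]; exact hcard
      · show (Fin.snoc y.1 true : Fin (L+1) → Bool) (Fin.castSucc ⟨L - 1, Nat.sub_lt hL Nat.one_pos⟩) = false
        rw [Fin.snoc_castSucc]
        exact hlast
    · intro x hx
      simp only [Finset.mem_filter, Finset.mem_univ, true_and, Bool.not_eq_true] at hx
      obtain ⟨⟨⟨⟨hb, hret, hcard⟩, hh, hlast⟩, hc⟩, hlnm⟩ := hx
      have hlast' : x.1 (Fin.last L) = true := hlast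
      exact Prod.ext (snoc_comp_castSucc hlast') (emb_res hlnm)
    · intro y hy
      refine Prod.ext ?_ (res_emb y.2)
      funext j
      show (Fin.snoc y.1 true : Fin (L+1) → Bool) (Fin.castSucc j) = y.1 j
      exact Fin.snoc_castSucc _ _ j
    · intro x hx
      simp only [Finset.mem_filter, Finset.mem_univ, true_and, Bool.not_eq_true] at hx
      obtain ⟨⟨⟨⟨hb, hret, hcard⟩, hh, hlast⟩, hc⟩, hlnm⟩ := hx
      have hlast' : x.1 (Fin.last L) = true := hlast
      have hsnoc : (Fin.snoc (fun j => x.1 (Fin.castSucc j)) true : Fin (L+1) → Bool) = x.1 :=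
        snoc_comp_castSucc hlast'
      have hM : emb (res x.2) = x.2 := emb_res hlnm
      have hretq : ∀ j ∈ res x.2, IsReturn (fun j => x.1 (Fin.castSucc j)) j := by
        rw [← returns_emb (b := true), hM, hsnoc]
        exact hret
      have hv : vmr x.1 x.2 = L + vmr (fun j => x.1 (Fin.castSucc j)) (res x.2) := by
        conv_lhs => rw [← hsnoc, ← hM]
        exact vmr_snoc_true_unmarked _ hL hc _ hretq
      rw [hv, pow_add]
  · -- marked part: last ∈ x.2
    unfold absum
    rw [Finset.mul_sum]
    refine Finset.sum_nbij' (i := fun x => ((fun j => x.1 (Fin.castSucc j)), res x.2))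
      (j := fun y => ((Fin.snoc y.1 true : Fin (L+1) → Bool), insert (Fin.last L) (emb y.2)))
      ?_ ?_ ?_ ?_ ?_
    · intro x hx
      simp only [Finset.mem_filter, Finset.mem_univ, true_and, Bool.not_eq_true,
        not_not] at hx ⊢
      obtain ⟨⟨⟨⟨hb, hret, hcard⟩, hh, hlast⟩, hc⟩, hmem⟩ := hx
      have hlast' : x.1 (Fin.last L) = true := hlast
      have hsnoc : (Fin.snoc (fun j => x.1 (Fin.castSucc j)) true : Fin (L+1) → Bool) = x.1 :=
        snoc_comp_castSucc hlast'
      rw [← hsnoc] at hb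
      have hbq : IsBallot (fun j => x.1 (Fin.castSucc j)) t t := isBallot_snoc_true.mp hb
      refine ⟨⟨hbq, ?_, ?_⟩, hL, hc⟩
      · intro j hj
        simp only [res, Finset.mem_filter, Finset.mem_univ, true_and] at hj
        have := hret _ hj
        rw [← hsnoc] at this
        exact (isReturn_snoc_castSucc _ true j).mp this
      · show r - 1 ≤ (res x.2).card
        have := card_res_of_last hmem
        omega
    · intro y hy
      simp only [Finset.mem_filter, Finset.mem_univ, true_and, Bool.not_eq_true,
        not_not] at hy ⊢
      obtain ⟨⟨hb, hret, hcard⟩, hh, hlast⟩ := hy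
      have hL2 : L = t + t := ballot_length hb
      refine ⟨⟨⟨⟨isBallot_snoc_true.mpr hb, ?_, ?_⟩,
        Nat.succ_pos L, snoc_mk_last y.1 true _⟩, ?_⟩, Finset.mem_insert_self _ _⟩
      · intro i hi
        rcases Finset.mem_insert.mp hi with hi | hi
        · subst hi
          constructor
          · rw [isValley_snoc_last _ _ hL]
            exact ⟨hlast, rfl⟩
          · have : ht (Fin.snoc y.1 true : Fin (L+1) → Bool) L = 0 := by
              rw [ht_snoc _ true (le_refl L), ht_total _ hb.1 hb.2.1]
              ring
            exact this
        · obtain ⟨a, ha, hae⟩ := Finset.mem_map.mp hi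
          subst hae
          exact (isReturn_snoc_castSucc _ true a).mpr (hret a ha)
      · rw [Finset.card_insert_of_notMem (last_not_mem_emb _), card_emb]
        omega
      · show (Fin.snoc y.1 true : Fin (L+1) → Bool) (Fin.castSucc ⟨L - 1, Nat.sub_lt hL Nat.one_pos⟩) = false
        rw [Fin.snoc_castSucc]
        exact hlast
    · intro x hx
      simp only [Finset.mem_filter, Finset.mem_univ, true_and, Bool.not_eq_true,
        not_not] at hx
      obtain ⟨⟨⟨⟨hb, hret, hcard⟩, hh, hlast⟩, hc⟩, hmem⟩ := hx
      have hlast' : x.1 (Fin.last L) = true := hlast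
      exact Prod.ext (snoc_comp_castSucc hlast') (emb_res_insert hmem)
    · intro y hy
      refine Prod.ext ?_ (res_insert_emb y.2)
      funext j
      show (Fin.snoc y.1 true : Fin (L+1) → Bool) (Fin.castSucc j) = y.1 j
      exact Fin.snoc_castSucc _ _ j
    · intro x hx
      simp only [Finset.mem_filter, Finset.mem_univ, true_and, Bool.not_eq_true,
        not_not] at hx
      obtain ⟨⟨⟨⟨hb, hret, hcard⟩, hh, hlast⟩, hc⟩, hmem⟩ := hx
      have hlast' : x.1 (Fin.last L) = true := hlast
      have hsnoc : (Fin.snoc (fun j => x.1 (Fin.castSucc j)) true : Fin (L+1) → Bool) = x.1 :=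
        snoc_comp_castSucc hlast'
      rw [← hsnoc] at hb
      have hbq : IsBallot (fun j => x.1 (Fin.castSucc j)) t t := isBallot_snoc_true.mp hb
      have hL2 : L = 2 * t := by
        have := ballot_length hbq
        omega
      have hretq : ∀ j ∈ res x.2, IsReturn (fun j => x.1 (Fin.castSucc j)) j := by
        intro j hj
        simp only [res, Finset.mem_filter, Finset.mem_univ, true_and] at hj
        have := hret _ hj
        rw [← hsnoc] at this
        exact (isReturn_snoc_castSucc _ true j).mp this
      have hx2 : x.2 = insert (Fin.last L) (emb (res x.2)) := (emb_res_insert hmem).symm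
      have hv : vmr x.1 x.2 = t + vmr (fun j => x.1 (Fin.castSucc j)) (res x.2) := by
        conv_lhs => rw [← hsnoc, hx2]
        exact vmr_snoc_true_marked _ hL2 hL hc _ hretq
      rw [hv, pow_add]

end bij3

section assemble
open PowerSeries
variable {L s t r : ℕ}

lemma lemma_A (hL : 0 < L) (hne : s ≠ t) :
    absum (L+1) (s+1) t r true
      = absum L s t r true + (PowerSeries.X : PowerSeries ℚ) ^ L * absum L s t r false := by
  have h0 : absum (L+1) (s+1) t r true
      = ∑ x ∈ (Finset.univ : Finset ((Fin (L+1) → Bool) × Finset (Fin (L+1)))).filter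
          (fun x => PP (L+1) (s+1) t r x ∧ Ends (L+1) x.1 true),
        (PowerSeries.X : PowerSeries ℚ) ^ vmr x.1 x.2 := rfl
  rw [h0, ← Finset.sum_filter_add_sum_filter_not
    ((Finset.univ : Finset ((Fin (L+1) → Bool) × Finset (Fin (L+1)))).filter
      (fun x => PP (L+1) (s+1) t r x ∧ Ends (L+1) x.1 true))
    (fun x => x.1 (Fin.castSucc ⟨L - 1, Nat.sub_lt hL Nat.one_pos⟩) = true)]
  rw [lemma_Aa hL, lemma_Ab hL hne]

lemma lemma_C (hL : 0 < L) :
    absum (L+1) (t+1) t r true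
      = (PowerSeries.X : PowerSeries ℚ) ^ L * absum L t t r false
        + (PowerSeries.X : PowerSeries ℚ) ^ t * absum L t t (r - 1) false := by
  have h0 : absum (L+1) (t+1) t r true
      = ∑ x ∈ (Finset.univ : Finset ((Fin (L+1) → Bool) × Finset (Fin (L+1)))).filter
          (fun x => PP (L+1) (t+1) t r x ∧ Ends (L+1) x.1 true),
        (PowerSeries.X : PowerSeries ℚ) ^ vmr x.1 x.2 := rfl
  rw [h0, ← Finset.sum_filter_add_sum_filter_not
    ((Finset.univ : Finset ((Fin (L+1) → Bool) × Finset (Fin (L+1)))).filter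
      (fun x => PP (L+1) (t+1) t r x ∧ Ends (L+1) x.1 true))
    (fun x => x.1 (Fin.castSucc ⟨L - 1, Nat.sub_lt hL Nat.one_pos⟩) = true)]
  rw [lemma_Aa hL, lemma_Cb hL, absum_true_self, zero_add]

end assemble

open PowerSeries

lemma qp_cc (n : ℕ) : constantCoeff (R := ℚ) (qp n) = 1 := by
  simp [qp]

lemma qp_ne (n : ℕ) : constantCoeff (R := ℚ) (qp n) ≠ 0 := by simp [qp_cc]

lemma qp_mul_inv (n : ℕ) : qp n * (qp n)⁻¹ = 1 := PowerSeries.mul_inv_cancel _ (qp_ne n)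

lemma qp_succ (n : ℕ) : qp (n + 1) = qp n * (1 - X ^ (n + 1)) := by
  rw [qp, Finset.prod_range_succ]; rfl

lemma qbin_self (n : ℕ) : qbin n n = 1 := by
  rw [qbin, if_pos le_rfl]
  have : qp (n - n) = 1 := by simp [qp]
  rw [this, mul_one, qp_mul_inv]

lemma qbin_zero (n : ℕ) : qbin n 0 = 1 := by
  rw [qbin, if_pos (Nat.zero_le _)]
  have : qp 0 = 1 := by simp [qp]
  simp only [this, one_mul, Nat.sub_zero, qp_mul_inv]

lemma qbin_of_gt {n k : ℕ} (h : n < k) : qbin n k = 0 := by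
  rw [qbin, if_neg (by omega)]

lemma qbin_mul_qp {n k : ℕ} (h : k ≤ n) : qbin n k * (qp k * qp (n - k)) = qp n := by
  rw [qbin, if_pos h, mul_assoc]
  rw [PowerSeries.inv_mul_cancel, mul_one]
  · simp [map_mul, qp_cc]

/-- Pascal 1 : qbin (n+1) (k+1) = qbin n k + X^(k+1) * qbin n (k+1) -/
lemma qbin_pascal1 (n k : ℕ) (h : k + 1 ≤ n + 1) :
    qbin (n + 1) (k + 1) = qbin n k + X ^ (k + 1) * qbin n (k + 1) := by
  rcases Nat.lt_or_ge n (k+1) with hn | hn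
  · -- k = n
    have hkn : k = n := by omega
    subst hkn
    rw [qbin_self, qbin_self, qbin_of_gt (by omega), mul_zero, add_zero]
  · -- k+1 ≤ n : multiply both sides by qp (k+1) * qp (n - k)
    have hk : k ≤ n := by omega
    have hcancel : ∀ (a b : PowerSeries ℚ),
        a * (qp (k+1) * qp (n - k)) = b * (qp (k+1) * qp (n - k)) → a = b := by
      intro a b hab
      have hu : IsUnit (qp (k+1) * qp (n - k)) := by
        refine IsUnit.of_mul_eq_one ((qp (k+1))⁻¹ * (qp (n-k))⁻¹) ?_
        rw [mul_mul_mul_comm, qp_mul_inv, qp_mul_inv, one_mul]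
      exact hu.mul_right_cancel hab
    apply hcancel
    have e1 : qbin (n+1) (k+1) * (qp (k+1) * qp (n - k)) = qp (n+1) := by
      have := qbin_mul_qp (n := n+1) (k := k+1) h
      rwa [show n + 1 - (k+1) = n - k by omega] at this
    rw [e1, add_mul]
    have e2 : qbin n k * (qp (k+1) * qp (n-k)) = qp n * (1 - X ^ (k+1)) := by
      rw [qp_succ k]
      have : qbin n k * (qp k * (1 - X^(k+1)) * qp (n-k))
           = qbin n k * (qp k * qp (n-k)) * (1 - X^(k+1)) := by ring
      rw [this, qbin_mul_qp hk]
    have e3 : X ^ (k+1) * qbin n (k+1) * (qp (k+1) * qp (n-k)) =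
        X ^ (k+1) * (qp n * (1 - X ^ (n - k))) := by
      have h2 : qp (n - k) = qp (n - (k+1)) * (1 - X ^ (n - k)) := by
        rw [show n - k = (n - (k+1)) + 1 by omega, qp_succ, show n - (k+1) + 1 = n - k by omega]
      rw [h2]
      have : X ^ (k+1) * qbin n (k+1) * (qp (k+1) * (qp (n - (k+1)) * (1 - X ^ (n-k))))
           = X ^ (k+1) * (qbin n (k+1) * (qp (k+1) * qp (n - (k+1)))) * (1 - X ^ (n-k)) := by
        ring
      rw [this, qbin_mul_qp hn]
      ring
    rw [e2, e3, qp_succ n]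
    have hx : (X : PowerSeries ℚ) ^ (k+1) * X ^ (n - k) = X ^ (n+1) := by
      rw [← pow_add]; congr 1; omega
    have hx2 : (X : PowerSeries ℚ) ^ (n+1) = X ^ (k+1) * X ^ (n - k) := hx.symm
    rw [hx2]; ring

lemma qbin_symm {n k : ℕ} (h : k ≤ n) : qbin n k = qbin n (n - k) := by
  rw [qbin, qbin, if_pos h, if_pos (Nat.sub_le _ _), show n - (n-k) = k by omega, mul_comm (qp (n-k))]

/-- Pascal 2 : qbin (n+1) (k+1) = X^(n-k) * qbin n k + qbin n (k+1) -/
lemma qbin_pascal2 (n k : ℕ) (h : k + 1 ≤ n + 1) :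
    qbin (n + 1) (k + 1) = X ^ (n - k) * qbin n k + qbin n (k + 1) := by
  rcases Nat.lt_or_ge n (k+1) with hn | hn
  · have hkn : k = n := by omega
    subst hkn
    rw [qbin_self, qbin_self, qbin_of_gt (by omega), Nat.sub_self, pow_zero, one_mul, add_zero]
  · have h1 := qbin_pascal1 n (n - (k+1)) (by omega)
    rw [show n - (k+1) + 1 = n - k by omega] at h1
    have e0 : qbin (n+1) (k+1) = qbin (n+1) (n - k) := by
      rw [qbin_symm h, show n + 1 - (k+1) = n - k by omega]
    have e1 : qbin n (n - (k+1)) = qbin n (k+1) := by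
      rw [qbin_symm (show n - (k+1) ≤ n by omega), show n - (n - (k+1)) = k + 1 by omega]
    have e2 : qbin n (n - k) = qbin n k := by
      rw [qbin_symm (show n - k ≤ n by omega), show n - (n - k) = k by omega]
    rw [e0, h1, e1, e2]; ring

lemma main_ind : ∀ n s t r : ℕ, s + t ≤ n →
    (t < s → absum (s+t) s t r true
        = (PowerSeries.X : PowerSeries ℚ) ^ ((r+1).choose 2 + (t - r)) * qbin (s+t-1) (s+r-1))
    ∧ (t < s → gsum (s+t) s t r
        = (PowerSeries.X : PowerSeries ℚ) ^ ((r+1).choose 2) * qbin (s+t) (s+r)) := by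
  intro n
  induction n with
  | zero =>
    intro s t r h
    constructor <;> intro hst <;> omega
  | succ n IH =>
    intro s t r hn
    rcases Nat.lt_or_ge (s + t) (n + 1) with hlt | hge
    · exact IH s t r (by omega)
    have hsum : s + t = n + 1 := by omega
    have Hpart : t < s → absum (s+t) s t r true
        = (PowerSeries.X : PowerSeries ℚ) ^ ((r+1).choose 2 + (t - r)) * qbin (s+t-1) (s+r-1) := by
      intro hst
      rcases Nat.eq_zero_or_pos t with ht0 | ht1
      · -- t = 0
        subst ht0
        simp only [Nat.add_zero]
        rcases Nat.eq_zero_or_pos r with hr0 | hr1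
        · subst hr0
          rw [absum_base hst, gsum_base, if_pos rfl]
          simp only [show ((0:ℕ)+1).choose 2 = 0 from rfl, Nat.sub_self, Nat.add_zero,
            pow_zero, one_mul]
          exact (qbin_self _).symm
        · rw [absum_base hst, gsum_base, if_neg (by omega)]
          rw [qbin_of_gt (show s - 1 < s + r - 1 by omega), mul_zero]
      · -- t ≥ 1
        rcases Nat.lt_or_ge t r with hrt | hrt
        · -- r > t : both sides vanish
          rw [absum_zero_of_lt hrt, qbin_of_gt (show s + t - 1 < s + r - 1 by omega), mul_zero]
        -- r ≤ t
        rcases Nat.lt_or_ge (t + 1) s with hs2 | hs2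
        · -- s > t + 1 : use lemma_A
          have hA := lemma_A (L := (s-1) + t) (s := s-1) (t := t) (r := r)
            (show 0 < (s-1) + t by omega) (show s - 1 ≠ t by omega)
          rw [show ((s-1) + t) + 1 = s + t by omega, show (s-1) + 1 = s by omega] at hA
          -- first term : IH H (s-1, t, r)
          have h1 := (IH (s-1) t r (by omega)).1 (show t < s - 1 by omega)
          rw [show (s-1) + t - 1 = s + t - 2 by omega,
              show (s-1) + r - 1 = s + r - 2 by omega] at h1
          -- second term: lemma_B then IH G (s-1, t-1, r)
          have hB := lemma_B (L := (s-1) + (t-1)) (s := s-1) (t := t-1) (r := r)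
            (show (t-1) + 1 ≤ s - 1 by omega)
          rw [show ((s-1) + (t-1)) + 1 = (s-1) + t by omega, show (t-1) + 1 = t by omega] at hB
          have h2 := (IH (s-1) (t-1) r (by omega)).2 (show t - 1 < s - 1 by omega)
          rw [show (s-1) + (t-1) = s + t - 2 by omega,
              show (s-1) + r = s + r - 1 by omega] at h2
          rw [show (s-1) + (t-1) = s + t - 2 by omega] at hB
          rw [hA, h1, hB, h2]
          -- Pascal 1 with n = s+t-2, k = s+r-2
          have hp := qbin_pascal1 (s+t-2) (s+r-2) (show (s+r-2) + 1 ≤ (s+t-2) + 1 by omega)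
          rw [show (s+t-2) + 1 = s + t - 1 by omega, show (s+r-2) + 1 = s + r - 1 by omega] at hp
          rw [hp]
          rw [show (s-1) + t = s + t - 1 by omega]
          rw [mul_add]
          simp only [← mul_assoc, ← pow_add]
          rw [show (r+1).choose 2 + (t-r) + (s+r-1) = s + t - 1 + ((r+1).choose 2) by omega]
        · -- s = t + 1 : use lemma_C
          have hs1 : s = t + 1 := by omega
          subst hs1
          have hC := lemma_C (L := t + t) (t := t) (r := r) (show 0 < t + t by omega)
          rw [show (t + t) + 1 = (t+1) + t by omega] at hC
          have hB1 := lemma_B (L := t + (t-1)) (s := t) (t := t-1) (r := r)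
            (show (t-1) + 1 ≤ t by omega)
          rw [show (t + (t-1)) + 1 = t + t by omega, show (t-1) + 1 = t by omega] at hB1
          have hB2 := lemma_B (L := t + (t-1)) (s := t) (t := t-1) (r := r-1)
            (show (t-1) + 1 ≤ t by omega)
          rw [show (t + (t-1)) + 1 = t + t by omega, show (t-1) + 1 = t by omega] at hB2
          have h1 := (IH t (t-1) r (by omega)).2 (show t - 1 < t by omega)
          have h2 := (IH t (t-1) (r-1) (by omega)).2 (show t - 1 < t by omega)
          rw [show t + (t-1) = 2*t - 1 by omega] at h1 h2 hB1 hB2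
          rw [hC, hB1, hB2, h1, h2]
          rw [show (t+1) + t - 1 = 2*t by omega, show (t+1) + r - 1 = t + r by omega]
          rcases Nat.eq_zero_or_pos r with hr0 | hr1
          · subst hr0
            -- qbin (2t) t = qbin (2t-1) t + X^t qbin (2t-1) t
            have hp := qbin_pascal1 (2*t-1) (t-1) (show (t-1) + 1 ≤ (2*t-1) + 1 by omega)
            rw [show (2*t-1) + 1 = 2*t by omega, show (t-1) + 1 = t by omega] at hp
            have hsym : qbin (2*t-1) (t-1) = qbin (2*t-1) t := by
              rw [qbin_symm (show t ≤ 2*t-1 by omega), show 2*t-1-t = t - 1 by omega]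
            rw [hsym] at hp
            simp only [show (0:ℕ) - 1 = 0 from rfl, Nat.add_zero, Nat.sub_zero] at *
            rw [hp]
            rw [show ((0:ℕ)+1).choose 2 = 0 by decide]
            rw [mul_add]
            simp only [pow_zero, one_mul, zero_add, ← mul_assoc, ← pow_add]
            ring
          · -- r ≥ 1
            have hp := qbin_pascal1 (2*t-1) (t+r-1) (show (t+r-1) + 1 ≤ (2*t-1) + 1 by omega)
            rw [show (2*t-1) + 1 = 2*t by omega, show (t+r-1) + 1 = t + r by omega] at hp
            rw [hp]
            rw [show t + (r-1) = t + r - 1 by omega]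
            rw [show ((r-1)+1).choose 2 = r.choose 2 by congr 1; omega]
            rw [mul_add]
            simp only [← mul_assoc, ← pow_add]
            have hch : (r+1).choose 2 = r.choose 2 + r := by
              rw [show (2:ℕ) = 1 + 1 from rfl, Nat.choose_succ_succ r 1,
                Nat.choose_one_right]; simp only [Nat.succ_eq_add_one]; omega
            rw [show (r+1).choose 2 + (t - r) + (t + r) = t + t + (r+1).choose 2 by omega]
            rw [show (r+1).choose 2 + (t - r) = t + r.choose 2 by omega]
            ring
    refine ⟨Hpart, ?_⟩
    intro hst
    rcases Nat.eq_zero_or_pos t with ht0 | ht1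
    · -- t = 0
      subst ht0
      simp only [Nat.add_zero]
      rcases Nat.eq_zero_or_pos r with hr0 | hr1
      · subst hr0
        rw [gsum_base, if_pos rfl]
        simp only [show ((0:ℕ)+1).choose 2 = 0 from rfl, Nat.add_zero, pow_zero, one_mul]
        exact (qbin_self _).symm
      · rw [gsum_base, if_neg (by omega), qbin_of_gt (show s < s + r by omega), mul_zero]
    · -- t ≥ 1
      rcases Nat.lt_or_ge t r with hrt | hrt
      · rw [gsum_zero_of_lt hrt, qbin_of_gt (show s + t < s + r by omega), mul_zero]
      -- r ≤ t
      rw [gsum_split (show 0 < s + t by omega)]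
      have hB := lemma_B (L := s + (t-1)) (s := s) (t := t-1) (r := r)
        (show (t-1) + 1 ≤ s by omega)
      rw [show (s + (t-1)) + 1 = s + t by omega, show (t-1) + 1 = t by omega] at hB
      have h2 := (IH s (t-1) r (by omega)).2 (show t - 1 < s by omega)
      rw [show s + (t-1) = s + t - 1 by omega] at h2 hB
      rw [Hpart hst, hB, h2]
      have hp := qbin_pascal2 (s+t-1) (s+r-1) (show (s+r-1) + 1 ≤ (s+t-1) + 1 by omega)
      rw [show (s+t-1) + 1 = s + t by omega, show (s+r-1) + 1 = s + r by omega,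
        show (s+t-1) - (s+r-1) = t - r by omega] at hp
      rw [hp]
      rw [mul_add]
      simp only [← mul_assoc, ← pow_add]

/-- The sum of `q^{vmr(D)}` over all ballot paths `D` from `(0,0)` to `(s+t, s-t)`
with at least `r` marked returns equals `q^{C(r+1,2)} qbinom(s+t, s+r)`. -/
theorem stmt_2 (s t r : ℕ) (hst : t < s) :
    ∑ x ∈ (Finset.univ : Finset ((Fin (s + t) → Bool) × Finset (Fin (s + t)))).filter
        (fun x => IsBallot x.1 s t ∧
          (∀ i ∈ x.2, IsReturn x.1 i) ∧ r ≤ x.2.card),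
      (PowerSeries.X : PowerSeries ℚ) ^ vmr x.1 x.2
      = PowerSeries.X ^ ((r + 1).choose 2) * qbin (s + t) (s + r) := by
  have h := (main_ind (s + t) s t r le_rfl).2 hst
  unfold gsum PP at h
  convert h using 2
  ext x
  simp only [Finset.mem_filter]
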